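/- Let a, x, y be positive reals with x ≥ y and x > 2a, and suppose 2·cosh²(a) + cosh(y) − cosh(x) = 0. Define f(λ) = 2·cosh²(λa) + cosh(λy) − cosh(λx). Then f(λ) < 0 for all λ > 1. -/

import Mathlib

open Real

theorem stmt_0 (a x y : ℝ) (ha : 0 < a) (hx : 0 < x) (hy : 0 < y)
    (hxy : y ≤ x) (hxa : 2 * a < x)
    (h1 : 2 * (Real.cosh a) ^ 2 + Real.cosh y - Real.cosh x = 0) :
    ∀ l : ℝ, 1 < l →
      2 * (Real.cosh (l * a)) ^ 2 + Real.cosh (l * y) - Real.cosh (l * x) < 0 := by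
  intro l hl
  set F : ℝ → ℝ := fun t =>
    Real.exp (-x * t) * (2 * (Real.cosh (t * a)) ^ 2 + Real.cosh (t * y) - Real.cosh (t * x))
    with hFdef
  have hderiv : ∀ t : ℝ, HasDerivAt F
      (Real.exp (-x * t) *
        ((4 * a * Real.cosh (t * a) * Real.sinh (t * a)
          + y * Real.sinh (t * y) - x * Real.sinh (t * x))
         - x * (2 * (Real.cosh (t * a)) ^ 2 + Real.cosh (t * y) - Real.cosh (t * x)))) t := by
    intro t
    have he : HasDerivAt (fun t : ℝ => Real.exp (-x * t)) (Real.exp (-x * t) * (-x)) t := by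
      have h0 : HasDerivAt (fun t : ℝ => -x * t) (-x) t := by
        simpa using (hasDerivAt_id t).const_mul (-x)
      exact h0.exp
    have hta : HasDerivAt (fun t : ℝ => t * a) a t := by
      simpa using (hasDerivAt_id t).mul_const a
    have hty : HasDerivAt (fun t : ℝ => t * y) y t := by
      simpa using (hasDerivAt_id t).mul_const y
    have htx : HasDerivAt (fun t : ℝ => t * x) x t := by
      simpa using (hasDerivAt_id t).mul_const x
    have hc2 : HasDerivAt (fun t : ℝ => (Real.cosh (t * a)) ^ 2)
        (2 * (Real.cosh (t * a)) ^ 1 * (Real.sinh (t * a) * a)) t := (hta.cosh).pow 2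
    have hf : HasDerivAt
        (fun t : ℝ => 2 * (Real.cosh (t * a)) ^ 2 + Real.cosh (t * y) - Real.cosh (t * x))
        (2 * (2 * (Real.cosh (t * a)) ^ 1 * (Real.sinh (t * a) * a))
          + Real.sinh (t * y) * y - Real.sinh (t * x) * x) t :=
      ((hc2.const_mul 2).add hty.cosh).sub htx.cosh
    have : HasDerivAt (fun t : ℝ => Real.exp (-x * t) *
        (2 * (Real.cosh (t * a)) ^ 2 + Real.cosh (t * y) - Real.cosh (t * x))) _ t := he.mul hf
    convert this using 1
    ring
  have hanti : StrictAntiOn F (Set.Ici (1 : ℝ)) := by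
    apply strictAntiOn_of_deriv_neg (convex_Ici 1)
    · exact fun t _ => (hderiv t).continuousAt.continuousWithinAt
    · intro t ht
      rw [interior_Ici] at ht
      have ht0 : (0 : ℝ) < t := lt_trans one_pos ht
      rw [(hderiv t).deriv]
      apply mul_neg_of_pos_of_neg (Real.exp_pos _)
      have hc1 : 1 ≤ Real.cosh (t * a) := Real.one_le_cosh _
      have hs0 : 0 ≤ Real.sinh (t * a) := Real.sinh_nonneg_iff.mpr (by positivity)
      have hcs : Real.cosh (t * a) ^ 2 - Real.sinh (t * a) ^ 2 = 1 :=
        Real.cosh_sq_sub_sinh_sq _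
      have hsy0 : 0 ≤ Real.sinh (t * y) := Real.sinh_nonneg_iff.mpr (by positivity)
      have hsylt : Real.sinh (t * y) < Real.cosh (t * y) := by
        have : Real.cosh (t * y) - Real.sinh (t * y) = Real.exp (-(t * y)) :=
          Real.cosh_sub_sinh _
        nlinarith [Real.exp_pos (-(t * y))]
      have hxcs : Real.cosh (t * x) - Real.sinh (t * x) ≤ 1 := by
        rw [Real.cosh_sub_sinh]
        exact Real.exp_le_one_iff.mpr (by nlinarith)
      nlinarith [mul_nonneg ha.le (sq_nonneg (Real.cosh (t * a) - Real.sinh (t * a))),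
        mul_nonneg (sub_nonneg.2 hxy) hsy0,
        mul_nonneg hx.le (sub_pos.2 hsylt).le,
        mul_nonneg hx.le (sub_nonneg.2 hxcs),
        mul_nonneg (sub_nonneg.2 hxa.le)
          (by nlinarith : (0 : ℝ) ≤ (Real.cosh (t * a)) ^ 2 - 1)]
  have hF1 : F 1 = 0 := by
    simp only [hFdef, one_mul]
    rw [h1, mul_zero]
  have hFl : F l < 0 := by
    have := hanti (Set.self_mem_Ici) (Set.mem_Ici.2 hl.le) hl
    rwa [hF1] at this
  by_contra hcon
  push_neg at hcon
  have : 0 ≤ F l := by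
    rw [hFdef]
    exact mul_nonneg (Real.exp_pos _).le hcon
  linarith
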